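/- For the Carlitz polynomials over F_q[T]: with e_j(x) = ∏_{deg h < j} (x - h) (product over all h ∈ F_q[T] of degree < j, including 0) and D_j = ∏ h over monic h of degree j, one has ord_T(e_j(T^n)) = n + (1 + q + ... + q^{j-1}) - j for all n > j ≥ 1, and hence ord_T(e_j(T^n)) > ord_T(D_j) = 1 + q + ... + q^{j-1}, so E_j(T^n) = e_j(T^n)/D_j ≡ 0 mod T. -/

import Mathlib

open Polynomial Finset
open scoped Classical
set_option linter.unusedSectionVars false
set_option maxHeartbeats 1000000

namespace Stmt12

variable {𝔽 : Type*} [Field 𝔽] [Fintype 𝔽]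


variable {𝔽 : Type*} [Field 𝔽] [Fintype 𝔽]

noncomputable def hp (j : ℕ) (c : Fin j → 𝔽) : Polynomial 𝔽 :=
  ∑ i : Fin j, C (c i) * X ^ (i : ℕ)

lemma hp_coeff (j : ℕ) (c : Fin j → 𝔽) (i : Fin j) : (hp j c).coeff i = c i := by
  rw [hp, finset_sum_coeff, Finset.sum_eq_single i]
  · simp
  · intro b _ hb
    have : (b : ℕ) ≠ (i : ℕ) := fun h => hb (Fin.val_injective h)
    simp [coeff_C_mul, coeff_X_pow, this.symm]
  · simp

lemma hp_degree (j : ℕ) (c : Fin j → 𝔽) : (hp j c).degree < (j : WithBot ℕ) := by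
  refine lt_of_le_of_lt (degree_sum_le _ _) ?_
  rw [Finset.sup_lt_iff (by exact_mod_cast WithBot.bot_lt_coe j)]
  intro i _
  refine lt_of_le_of_lt (degree_C_mul_X_pow_le _ _) ?_
  exact_mod_cast i.isLt

lemma hp_zero (j : ℕ) : hp j (0 : Fin j → 𝔽) = 0 := by simp [hp]

lemma hp_neg (j : ℕ) (c : Fin j → 𝔽) : hp j (-c) = -hp j c := by
  simp [hp, Finset.sum_neg_distrib]

lemma hp_reconstruct (j : ℕ) (f : Polynomial 𝔽) (hf : f.degree < (j : WithBot ℕ)) :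
    hp j (fun i : Fin j => f.coeff i) = f := by
  rcases eq_or_ne f 0 with rfl | h
  · simp [hp]
  · have hnd : f.natDegree < j := by
      rwa [← natDegree_lt_iff_degree_lt h] at hf
    rw [hp, Fin.sum_univ_eq_sum_range (fun i => C (f.coeff i) * X ^ i) j]
    simp only [C_mul_X_pow_eq_monomial]
    exact (as_sum_range' f j hnd).symm

lemma countA (j : ℕ) (p : Polynomial 𝔽) (hm : p.Monic) (s : ℕ)
    (hsd : s * p.natDegree ≤ j) (g : Polynomial 𝔽) :
    ((univ : Finset (Fin j → 𝔽)).filter fun c => p ^ s ∣ g - hp j c).card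
      = Fintype.card 𝔽 ^ (j - s * p.natDegree) := by
  set d := s * p.natDegree with hd
  set P := p ^ s with hPdef
  have hPm : P.Monic := hm.pow s
  have hPne : P ≠ 0 := hPm.ne_zero
  have hPnd : P.natDegree = d := by rw [hPdef, natDegree_pow]
  have hPdeg : P.degree = (d : WithBot ℕ) := by
    rw [degree_eq_natDegree hPne, hPnd]
  set r := g %ₘ P with hr
  have hrd : r.degree < (d : WithBot ℕ) := by
    have := degree_modByMonic_lt g hPm
    rwa [hPdeg] at this
  have hrj : r.degree < (j : WithBot ℕ) :=
    lt_of_lt_of_le hrd (by exact_mod_cast hsd)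
  have hgr : P ∣ g - r := ⟨g /ₘ P, by
    conv_lhs => rw [← modByMonic_add_div g P]
    ring⟩
  -- helper for degree of P * K
  have hmulj : ∀ K : Polynomial 𝔽, K.degree < ((j - d : ℕ) : WithBot ℕ) →
      (P * K).degree < (j : WithBot ℕ) := by
    intro K hK
    rcases eq_or_ne K 0 with rfl | hK0
    · simp only [mul_zero, degree_zero]
      exact_mod_cast WithBot.bot_lt_coe j
    · rw [degree_mul, hPdeg, degree_eq_natDegree hK0]
      have h1 : K.natDegree < j - d := by
        rwa [degree_eq_natDegree hK0, Nat.cast_lt] at hK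
      exact_mod_cast (by omega : d + K.natDegree < j)
  have key : ∀ K : Polynomial 𝔽, (P * K) /ₘ P = K := by
    intro K
    have h0 : (P * K) %ₘ P = 0 := (modByMonic_eq_zero_iff_dvd hPm).2 ⟨K, rfl⟩
    have h2 := modByMonic_add_div (P * K) P
    rw [h0, zero_add] at h2
    exact mul_left_cancel₀ hPne h2
  have hcardR : Fintype.card 𝔽 ^ (j - d) = (univ : Finset (Fin (j - d) → 𝔽)).card := by
    simp [Finset.card_univ]
  rw [hcardR]
  refine Finset.card_nbij'
    (i := fun c t => ((hp j c - r) /ₘ P).coeff t)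
    (j := fun k i => (r + P * hp (j - d) k).coeff i)
    (fun c _ => mem_univ _) ?_ ?_ ?_
  · -- fro maps into filter
    intro k _
    have hdegh : (r + P * hp (j - d) k).degree < (j : WithBot ℕ) := by
      refine lt_of_le_of_lt (degree_add_le _ _) (max_lt hrj ?_)
      exact hmulj _ (hp_degree _ k)
    have hrec : hp j (fun i : Fin j => (r + P * hp (j - d) k).coeff i)
        = r + P * hp (j - d) k := hp_reconstruct j _ hdegh
    rw [mem_coe, mem_filter]
    refine ⟨mem_univ _, ?_⟩
    show P ∣ g - hp j (fun i : Fin j => (r + P * hp (j - d) k).coeff i)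
    rw [hrec, show g - (r + P * hp (j - d) k) = (g - r) - P * hp (j - d) k by ring]
    exact dvd_sub hgr ⟨_, rfl⟩
  · -- left inverse
    intro c hc
    rw [mem_coe, mem_filter] at hc
    have hdvd : P ∣ hp j c - r := by
      rw [show hp j c - r = (g - r) - (g - hp j c) by ring]
      exact dvd_sub hgr hc.2
    obtain ⟨K, hK⟩ := hdvd
    have hKq : (hp j c - r) /ₘ P = K := by rw [hK]; exact key K
    have hKdeg : K.degree < ((j - d : ℕ) : WithBot ℕ) := by
      have hsub : (hp j c - r).degree < (j : WithBot ℕ) :=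
        lt_of_le_of_lt (degree_sub_le _ _) (max_lt (hp_degree j c) hrj)
      rcases eq_or_ne K 0 with rfl | hK0
      · simp only [degree_zero]
        exact_mod_cast WithBot.bot_lt_coe (j - d)
      · rw [hK, degree_mul, hPdeg, degree_eq_natDegree hK0] at hsub
        rw [degree_eq_natDegree hK0, Nat.cast_lt]
        have hdj : (d : WithBot ℕ) + K.natDegree < (j : WithBot ℕ) := hsub
        have : d + K.natDegree < j := by exact_mod_cast hdj
        omega
    funext i
    show (r + P * hp (j - d) fun t : Fin (j - d) => ((hp j c - r) /ₘ P).coeff t).coeff i = c i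
    rw [hKq, hp_reconstruct (j - d) K hKdeg, ← hK,
      show r + (hp j c - r) = hp j c by ring, hp_coeff]
  · -- right inverse
    intro k _
    have hdegh : (r + P * hp (j - d) k).degree < (j : WithBot ℕ) := by
      refine lt_of_le_of_lt (degree_add_le _ _) (max_lt hrj ?_)
      exact hmulj _ (hp_degree _ k)
    funext t
    show ((hp j (fun i : Fin j => (r + P * hp (j - d) k).coeff i) - r) /ₘ P).coeff t = k t
    rw [hp_reconstruct j _ hdegh, add_sub_cancel_left, key, hp_coeff]

variable {𝔽 : Type*} [Field 𝔽] [Fintype 𝔽]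

lemma filter_Icc_card (N m : ℕ) (Q : ℕ → Prop) [DecidablePred Q] (hmN : m ≤ N)
    (hQ : ∀ s, Q s ↔ s ≤ m) : ((Icc 1 N).filter Q).card = m := by
  have h : (Icc 1 N).filter Q = Icc 1 m := by
    ext s
    simp only [mem_filter, mem_Icc, hQ]
    omega
  rw [h, Nat.card_Icc]
  omega

lemma rm_eq_card (N : ℕ) (f : Polynomial 𝔽) (hf : f ≠ 0) (hN : f.natDegree ≤ N) :
    rootMultiplicity 0 f = ((Icc 1 N).filter fun s => X ^ s ∣ f).card := by
  set m := rootMultiplicity 0 f with hm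
  have hdvd : X ^ m ∣ f := by
    have := pow_rootMultiplicity_dvd f 0
    simpa using this
  have hmN : m ≤ N := by
    have h2 := natDegree_le_of_dvd hdvd hf
    rw [natDegree_X_pow] at h2
    exact h2.trans hN
  symm
  refine filter_Icc_card N m _ hmN fun s => ?_
  simpa using (le_rootMultiplicity_iff hf (a := 0) (n := s)).symm

lemma emult_eq_card (N : ℕ) (p f : Polynomial 𝔽) (hndvd : ¬ p ^ (N + 1) ∣ f) :
    emultiplicity p f = (((Icc 1 N).filter fun s => p ^ s ∣ f).card : ℕ∞) := by
  have hlt : emultiplicity p f < ((N + 1 : ℕ) : ℕ∞) := emultiplicity_lt_iff_not_dvd.2 hndvd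
  have hne : emultiplicity p f ≠ ⊤ := hlt.ne_top
  obtain ⟨m, hm⟩ := WithTop.ne_top_iff_exists.mp hne
  have hmN : m ≤ N := by
    rw [← hm] at hlt
    have h3 : m < N + 1 := by
      have := (Nat.cast_lt (α := ℕ∞)).mp hlt
      omega
    omega
  have hiff : ∀ s, p ^ s ∣ f ↔ s ≤ m := by
    intro s
    rw [pow_dvd_iff_le_emultiplicity, ← hm]
    exact Nat.cast_le
  rw [filter_Icc_card N m _ hmN hiff]
  exact hm.symm

lemma sum_card_swap {α : Type*} [Fintype α] (N : ℕ) (Q : ℕ → α → Prop)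
    [∀ s c, Decidable (Q s c)] :
    ∑ c : α, ((Icc 1 N).filter fun s => Q s c).card
      = ∑ s ∈ Icc 1 N, ((univ : Finset α).filter fun c => Q s c).card := by
  simp only [Finset.card_filter]
  exact Finset.sum_comm

lemma rm_prod {α : Type*} (s : Finset α) (f : α → Polynomial 𝔽)
    (hf : ∀ c ∈ s, f c ≠ 0) (x : 𝔽) :
    rootMultiplicity x (∏ c ∈ s, f c) = ∑ c ∈ s, rootMultiplicity x (f c) := by
  classical
  induction s using Finset.cons_induction with
  | empty => simp [rootMultiplicity_eq_zero (by simp : ¬ (1 : Polynomial 𝔽).IsRoot x)]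
  | cons a t ha ih =>
    rw [Finset.prod_cons, Finset.sum_cons,
      rootMultiplicity_mul (mul_ne_zero (hf a (mem_cons_self a t))
        (Finset.prod_ne_zero_iff.2 fun c hc => hf c (mem_cons_of_mem hc))),
      ih fun c hc => hf c (mem_cons_of_mem hc)]

lemma sum_pow_reindex (j q : ℕ) :
    ∑ s ∈ Icc 1 j, q ^ (j - s) = ∑ k ∈ range j, q ^ k := by
  refine Finset.sum_nbij' (i := fun s => j - s) (j := fun k => j - k) ?_ ?_ ?_ ?_ ?_
  · intro a ha; simp only [mem_Icc] at ha; simp only [mem_range]; omega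
  · intro a ha; simp only [mem_range] at ha; simp only [mem_Icc]; omega
  · intro a ha; simp only [mem_Icc] at ha; show j - (j - a) = a; omega
  · intro a ha; simp only [mem_range] at ha; show j - (j - a) = a; omega
  · intro a ha; rfl


end Stmt12
theorem stmt_12 (𝔽 : Type*) [Field 𝔽] [Fintype 𝔽] (j n : ℕ) (hj : 1 ≤ j) (hn : j < n) :
    (Polynomial.rootMultiplicity 0
        (∏ c : Fin j → 𝔽, ((Polynomial.X : Polynomial 𝔽) ^ n -
          ∑ i : Fin j, Polynomial.C (c i) * Polynomial.X ^ (i : ℕ))) =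
      n + (∑ k ∈ Finset.range j, Fintype.card 𝔽 ^ k) - j) ∧
    (Polynomial.rootMultiplicity 0
        (∏ c : Fin j → 𝔽, ((Polynomial.X : Polynomial 𝔽) ^ j +
          ∑ i : Fin j, Polynomial.C (c i) * Polynomial.X ^ (i : ℕ))) =
      ∑ k ∈ Finset.range j, Fintype.card 𝔽 ^ k) ∧
    ∃ E : Polynomial 𝔽,
      (∏ c : Fin j → 𝔽, ((Polynomial.X : Polynomial 𝔽) ^ n -
          ∑ i : Fin j, Polynomial.C (c i) * Polynomial.X ^ (i : ℕ))) =
        (∏ c : Fin j → 𝔽, ((Polynomial.X : Polynomial 𝔽) ^ j +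
          ∑ i : Fin j, Polynomial.C (c i) * Polynomial.X ^ (i : ℕ))) * E ∧
      Polynomial.X ∣ E := by
  classical
  open Stmt12 in
  have hmain :
      (Polynomial.rootMultiplicity 0 (∏ c : Fin j → 𝔽, (Polynomial.X ^ n - hp j c)) =
        n + (∑ k ∈ Finset.range j, Fintype.card 𝔽 ^ k) - j) ∧
      (Polynomial.rootMultiplicity 0 (∏ c : Fin j → 𝔽, (Polynomial.X ^ j + hp j c)) =
        ∑ k ∈ Finset.range j, Fintype.card 𝔽 ^ k) ∧
      ∃ E : Polynomial 𝔽,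
        (∏ c : Fin j → 𝔽, (Polynomial.X ^ n - hp j c)) =
          (∏ c : Fin j → 𝔽, (Polynomial.X ^ j + hp j c)) * E ∧ Polynomial.X ∣ E := by
    set q := Fintype.card 𝔽 with hq
    set S := ∑ k ∈ Finset.range j, q ^ k with hS
    -- basic facts about factors
    have hfact : ∀ m : ℕ, j ≤ m → ∀ c : Fin j → 𝔽,
        (X ^ m - hp j c) ≠ 0 ∧ (X ^ m - hp j c).natDegree = m := by
      intro m hm c
      have hdeg : (X ^ m - hp j c).degree = (m : WithBot ℕ) := by
        rw [degree_sub_eq_left_of_degree_lt, degree_X_pow]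
        rw [degree_X_pow]
        exact lt_of_lt_of_le (hp_degree j c) (by exact_mod_cast hm)
      constructor
      · intro h0
        rw [h0, degree_zero] at hdeg
        simp at hdeg
      · exact natDegree_eq_of_degree_eq_some hdeg
    -- reindex the D-product
    have hDre : (∏ c : Fin j → 𝔽, (X ^ j + hp j c)) = ∏ c : Fin j → 𝔽, (X ^ j - hp j c) := by
      refine Fintype.prod_equiv (Equiv.neg (Fin j → 𝔽)) _ _ fun c => ?_
      simp [Equiv.neg_apply, hp_neg, sub_neg_eq_add]
    -- the generic evaluation of root multiplicities of the products
    have hcount : ∀ m : ℕ, j ≤ m →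
        rootMultiplicity 0 (∏ c : Fin j → 𝔽, (X ^ m - hp j c)) =
          ∑ s ∈ Icc 1 m, ((univ : Finset (Fin j → 𝔽)).filter
            fun c => X ^ s ∣ X ^ m - hp j c).card := by
      intro m hm
      rw [rm_prod univ _ (fun c _ => (hfact m hm c).1) 0]
      rw [Finset.sum_congr rfl fun c _ =>
        rm_eq_card m _ (hfact m hm c).1 (le_of_eq (hfact m hm c).2)]
      exact sum_card_swap m fun s c => X ^ s ∣ X ^ m - hp j c
    have hcountlow : ∀ m : ℕ, ∀ s ∈ Icc 1 j,
        ((univ : Finset (Fin j → 𝔽)).filter fun c => X ^ s ∣ X ^ m - hp j c).card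
          = q ^ (j - s) := by
      intro m s hs
      have hs' : s ≤ j := (mem_Icc.mp hs).2
      have := countA j (X : Polynomial 𝔽) monic_X s (by rw [natDegree_X, mul_one]; exact hs') (X ^ m)
      rw [natDegree_X, mul_one] at this
      exact this
    -- Part 2
    have hpart2 : rootMultiplicity 0 (∏ c : Fin j → 𝔽, (X ^ j + hp j c)) = S := by
      rw [hDre, hcount j le_rfl, Finset.sum_congr rfl (hcountlow j)]
      exact sum_pow_reindex j q
    -- Part 1
    have hpart1 : rootMultiplicity 0 (∏ c : Fin j → 𝔽, (X ^ n - hp j c)) = n + S - j := by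
      rw [hcount n hn.le]
      have hsplit := Finset.sum_Ioc_consecutive
        (fun s => ((univ : Finset (Fin j → 𝔽)).filter
          fun c => X ^ s ∣ X ^ n - hp j c).card) (Nat.zero_le j) hn.le
      rw [show Icc 1 n = Ioc 0 n from Finset.Icc_add_one_left_eq_Ioc 0 n, ← hsplit]
      have h1 : ∑ s ∈ Ioc 0 j, ((univ : Finset (Fin j → 𝔽)).filter
          fun c => X ^ s ∣ X ^ n - hp j c).card = S := by
        rw [show Ioc 0 j = Icc 1 j from (Finset.Icc_add_one_left_eq_Ioc 0 j).symm,
          Finset.sum_congr rfl (hcountlow n)]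
        exact sum_pow_reindex j q
      have h2 : ∑ s ∈ Ioc j n, ((univ : Finset (Fin j → 𝔽)).filter
          fun c => X ^ s ∣ X ^ n - hp j c).card = n - j := by
        have hone : ∀ s ∈ Ioc j n, ((univ : Finset (Fin j → 𝔽)).filter
            fun c => X ^ s ∣ X ^ n - hp j c).card = 1 := by
          intro s hs
          obtain ⟨hjs, hsn⟩ := mem_Ioc.mp hs
          have : ((univ : Finset (Fin j → 𝔽)).filter
              fun c => X ^ s ∣ X ^ n - hp j c) = {0} := by
            ext c
            simp only [mem_filter, mem_univ, true_and, Finset.mem_singleton]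
            constructor
            · intro hdvd
              funext i
              have hco := (X_pow_dvd_iff.mp hdvd) i (lt_trans i.isLt hjs)
              have hni : (i : ℕ) ≠ n := by have := i.isLt; omega
              rw [coeff_sub, coeff_X_pow, if_neg hni, hp_coeff] at hco
              rw [zero_sub, neg_eq_zero] at hco
              simpa using hco
            · rintro rfl
              rw [hp_zero, sub_zero]
              exact pow_dvd_pow X hsn
          rw [this, Finset.card_singleton]
        rw [Finset.sum_congr rfl hone, Finset.sum_const, smul_eq_mul, mul_one, Nat.card_Ioc]
      rw [h1, h2]
      omega
    refine ⟨hpart1, hpart2, ?_⟩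
    -- Part 3
    have he0 : (∏ c : Fin j → 𝔽, (X ^ n - hp j c)) ≠ 0 :=
      Finset.prod_ne_zero_iff.2 fun c _ => (hfact n hn.le c).1
    have hD0 : (∏ c : Fin j → 𝔽, (X ^ j - hp j c)) ≠ 0 :=
      Finset.prod_ne_zero_iff.2 fun c _ => (hfact j le_rfl c).1
    have hdvd : (∏ c : Fin j → 𝔽, (X ^ j - hp j c)) ∣ ∏ c : Fin j → 𝔽, (X ^ n - hp j c) := by
      rw [UniqueFactorizationMonoid.dvd_iff_normalizedFactors_le_normalizedFactors hD0 he0,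
        Multiset.le_iff_count]
      intro p
      by_cases hpmem : p ∈ UniqueFactorizationMonoid.normalizedFactors
        (∏ c : Fin j → 𝔽, (X ^ j - hp j c))
      swap
      · simp [Multiset.count_eq_zero_of_notMem hpmem]
      have hirr := UniqueFactorizationMonoid.irreducible_of_normalized_factor p hpmem
      have hnorm := UniqueFactorizationMonoid.normalize_normalized_factor p hpmem
      have hpne : p ≠ 0 := hirr.ne_zero
      have hmon : p.Monic := by
        have := monic_normalize (p := p) hpne
        rwa [hnorm] at this
      have hprime : Prime p := UniqueFactorizationMonoid.irreducible_iff_prime.mp hirr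
      have hd1 : 1 ≤ p.natDegree := by
        rcases Nat.eq_zero_or_pos p.natDegree with h0 | h0
        · exact absurd (hmon.natDegree_eq_zero.mp h0 ▸ isUnit_one) hirr.not_isUnit
        · exact h0
      suffices hle : emultiplicity p (∏ c : Fin j → 𝔽, (X ^ j - hp j c))
          ≤ emultiplicity p (∏ c : Fin j → 𝔽, (X ^ n - hp j c)) by
        rw [UniqueFactorizationMonoid.emultiplicity_eq_count_normalizedFactors hirr hD0,
          UniqueFactorizationMonoid.emultiplicity_eq_count_normalizedFactors hirr he0,
          hnorm] at hle
        exact_mod_cast hle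
      have hndvdgen : ∀ m : ℕ, j ≤ m → ∀ c : Fin j → 𝔽, ¬ p ^ (m + 1) ∣ (X ^ m - hp j c) := by
        intro m hm c hdv
        have h4 := natDegree_le_of_dvd hdv (hfact m hm c).1
        rw [natDegree_pow, (hfact m hm c).2] at h4
        have h5 : m + 1 ≤ (m + 1) * p.natDegree := Nat.le_mul_of_pos_right _ hd1
        omega
      rw [Finset.emultiplicity_prod hprime, Finset.emultiplicity_prod hprime,
        Finset.sum_congr rfl fun c _ => emult_eq_card j p _ (hndvdgen j le_rfl c),
        Finset.sum_congr rfl fun c _ => emult_eq_card n p _ (hndvdgen n hn.le c),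
        ← Nat.cast_sum, ← Nat.cast_sum, Nat.cast_le,
        sum_card_swap j (fun s c => p ^ s ∣ X ^ j - hp j c),
        sum_card_swap n (fun s c => p ^ s ∣ X ^ n - hp j c)]
      calc ∑ s ∈ Icc 1 j, ((univ : Finset (Fin j → 𝔽)).filter
              fun c => p ^ s ∣ X ^ j - hp j c).card
          ≤ ∑ s ∈ Icc 1 j, ((univ : Finset (Fin j → 𝔽)).filter
              fun c => p ^ s ∣ X ^ n - hp j c).card := by
            refine Finset.sum_le_sum fun s hs => ?_
            by_cases hsd : s * p.natDegree ≤ j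
            · rw [countA j p hmon s hsd (X ^ j), countA j p hmon s hsd (X ^ n)]
            · have hempty : ((univ : Finset (Fin j → 𝔽)).filter
                  fun c => p ^ s ∣ X ^ j - hp j c) = ∅ := by
                refine Finset.filter_eq_empty_iff.2 fun c _ => fun hdv => ?_
                have h4 := natDegree_le_of_dvd hdv (hfact j le_rfl c).1
                rw [natDegree_pow, (hfact j le_rfl c).2] at h4
                omega
              rw [hempty]
              simp
        _ ≤ ∑ s ∈ Icc 1 n, ((univ : Finset (Fin j → 𝔽)).filter
              fun c => p ^ s ∣ X ^ n - hp j c).card :=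
            Finset.sum_le_sum_of_subset (Finset.Icc_subset_Icc_right hn.le)
    rw [hDre]
    obtain ⟨E, hE⟩ := hdvd
    refine ⟨E, hE, ?_⟩
    have hE0 : E ≠ 0 := by
      rintro rfl
      rw [mul_zero] at hE
      exact he0 hE
    have hrm : rootMultiplicity 0 (∏ c : Fin j → 𝔽, (X ^ n - hp j c))
        = rootMultiplicity 0 (∏ c : Fin j → 𝔽, (X ^ j - hp j c))
          + rootMultiplicity 0 E := by
      rw [hE]
      exact rootMultiplicity_mul (by rw [← hE]; exact he0)
    rw [hpart1, ← hDre, hpart2] at hrm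
    have hrmE : rootMultiplicity 0 E ≠ 0 := by omega
    have hXdvd := pow_rootMultiplicity_dvd E 0
    rw [map_zero, sub_zero] at hXdvd
    exact dvd_trans (dvd_pow_self X hrmE) hXdvd
  refine ⟨?_, ?_, ?_⟩
  · have := hmain.1; simpa only [hp] using this
  · have := hmain.2.1; simpa only [hp] using this
  · have := hmain.2.2; simpa only [hp] using this
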